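/- Let ∇ be an affine connection on a smooth manifold M with associated torsion-free connection ∇⁰. For every vector field X on M, the covariant derivative ∇⁰_X equals (1/2)(L^s_X + L_X) as derivations of the algebra Υ^•(M) of symmetric forms, where L_X is the ordinary Lie derivative and L^s_X the symmetric Lie derivative of ∇. -/

import Mathlib

open scoped Manifold
open Function

noncomputable section

namespace SymCartan

variable {E : Type} [NormedAddCommGroup E] [NormedSpace ℝ E]
  {H : Type} [TopologicalSpace H] {I : ModelWithCorners ℝ E H}
  {M : Type} [TopologicalSpace M] [ChartedSpace H M] [IsManifold I (⊤ : ℕ∞) M]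

/-- A (not necessarily smooth) vector field on `M`: a section of the tangent bundle. -/
def VF (I : ModelWithCorners ℝ E H) (M : Type) [TopologicalSpace M] [ChartedSpace H M] : Type :=
  ∀ x : M, TangentSpace I x

/-- Smoothness of a vector field, i.e. smoothness as a section of the tangent bundle. -/
def SmoothVF (X : VF I M) : Prop :=
  ContMDiff I I.tangent (⊤ : ℕ∞) (fun x => (⟨x, X x⟩ : TangentBundle I M))

/-- Smoothness of a real function on `M`. -/
def SmoothF (I : ModelWithCorners ℝ E H) {M : Type} [TopologicalSpace M] [ChartedSpace H M]
    (f : M → ℝ) : Prop :=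
  ContMDiff I 𝓘(ℝ, ℝ) (⊤ : ℕ∞) f

/-- The action of a vector field on a function, `(X f)(x) = df_x(X_x)`. -/
def vAct (X : VF I M) (f : M → ℝ) : M → ℝ := fun x => mfderiv I 𝓘(ℝ, ℝ) f x (X x)

/-- An affine connection on `M`: a covariant derivative on vector fields, with the usual
axioms required when all inputs are smooth. -/
structure AffConn (I : ModelWithCorners ℝ E H) (M : Type) [TopologicalSpace M]
    [ChartedSpace H M] [IsManifold I (⊤ : ℕ∞) M] where
  cov : VF I M → VF I M → VF I M
  cov_smooth : ∀ X Y : VF I M, SmoothVF X → SmoothVF Y → SmoothVF (cov X Y)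
  cov_add_left : ∀ X X' Y : VF I M, SmoothVF X → SmoothVF X' → SmoothVF Y →
    cov (fun x => X x + X' x) Y = fun x => cov X Y x + cov X' Y x
  cov_smul_left : ∀ (f : M → ℝ) (X Y : VF I M), SmoothF I f → SmoothVF X → SmoothVF Y →
    cov (fun x => f x • X x) Y = fun x => f x • cov X Y x
  cov_add_right : ∀ X Y Y' : VF I M, SmoothVF X → SmoothVF Y → SmoothVF Y' →
    cov X (fun x => Y x + Y' x) = fun x => cov X Y x + cov X Y' x
  cov_smul_right : ∀ (f : M → ℝ) (X Y : VF I M), SmoothF I f → SmoothVF X → SmoothVF Y →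
    cov X (fun x => f x • Y x) = fun x => vAct X f x • Y x + f x • cov X Y x

/-- The symmetric bracket `[X,Y]_s = ∇_X Y + ∇_Y X` of a connection. -/
def sBr (D : AffConn I M) (X Y : VF I M) : VF I M := fun x => D.cov X Y x + D.cov Y X x

/-- The Lie bracket of two vector fields: the unique smooth vector field acting on smooth
functions as the commutator `X ∘ Y - Y ∘ X` (junk value if no such field exists). -/
def lieB (X Y : VF I M) : VF I M := by
  classical
  exact if h : ∃ Z : VF I M, SmoothVF Z ∧ ∀ f : M → ℝ, SmoothF I f →
      vAct Z f = fun x => vAct X (vAct Y f) x - vAct Y (vAct X f) x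
    then h.choose else fun _ => 0

/-- A connection is torsion-free iff `∇_X Y - ∇_Y X` acts on smooth functions as the
commutator of `X` and `Y`, i.e. iff it equals the Lie bracket `[X, Y]`. -/
def TorsionFree (D : AffConn I M) : Prop :=
  ∀ X Y : VF I M, SmoothVF X → SmoothVF Y → ∀ f : M → ℝ, SmoothF I f →
    (fun x => vAct (D.cov X Y) f x - vAct (D.cov Y X) f x) =
      fun x => vAct X (vAct Y f) x - vAct Y (vAct X f) x

/-- The curvature `R(X,Y)Z = ∇_X ∇_Y Z - ∇_Y ∇_X Z - ∇_[X,Y] Z` of a connection. -/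
def curv (D : AffConn I M) (X Y Z : VF I M) : VF I M :=
  fun x => D.cov X (D.cov Y Z) x - D.cov Y (D.cov X Z) x - D.cov (lieB X Y) Z x

/-! ### Symmetric forms, Koszul style.

A covariant tensor on a manifold is faithfully encoded by its pairing with (smooth) vector
fields, which is a function-multilinear map on vector fields. A "degree `r`" tensor is
encoded as a map taking a sequence of vector fields (only the first `r` entries matter)
to a function on `M`. -/

/-- Koszul encoding of covariant tensor fields. -/
def TensorK (I : ModelWithCorners ℝ E H) (M : Type) [TopologicalSpace M]
    [ChartedSpace H M] : Type :=
  (ℕ → VF I M) → M → ℝ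

/-- Equality of (Koszul-encoded) tensors: equality of values on smooth vector fields. -/
def EqTen (φ ψ : TensorK I M) : Prop :=
  ∀ v : ℕ → VF I M, (∀ i, SmoothVF (v i)) → φ v = ψ v

/-- `φ` is a smooth symmetric `r`-form: it only depends on the first `r` arguments,
it is symmetric and `C^∞(M)`-multilinear in them, and maps smooth fields to smooth
functions. -/
def IsSymTensor (r : ℕ) (φ : TensorK I M) : Prop :=
  (∀ v w : ℕ → VF I M, (∀ i, SmoothVF (v i)) → (∀ i, SmoothVF (w i)) →
      (∀ i, i < r → v i = w i) → φ v = φ w) ∧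
  (∀ v : ℕ → VF I M, (∀ i, SmoothVF (v i)) → ∀ i j : ℕ, i < r → j < r →
      φ (v ∘ Equiv.swap i j) = φ v) ∧
  (∀ v : ℕ → VF I M, (∀ i, SmoothVF (v i)) → ∀ i, i < r →
      ∀ X Y : VF I M, SmoothVF X → SmoothVF Y → ∀ c : ℝ,
      φ (Function.update v i (fun x => X x + c • Y x)) =
        fun x => φ (Function.update v i X) x + c * φ (Function.update v i Y) x) ∧
  (∀ v : ℕ → VF I M, (∀ i, SmoothVF (v i)) → ∀ i, i < r → ∀ f : M → ℝ, SmoothF I f →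
      φ (Function.update v i (fun x => f x • v i x)) = fun x => f x * φ v x) ∧
  (∀ v : ℕ → VF I M, (∀ i, SmoothVF (v i)) → SmoothF I (φ v))

/-- The tensor of degree 0 associated to a function. -/
def ofFun (I : ModelWithCorners ℝ E H) {M : Type} [TopologicalSpace M] [ChartedSpace H M]
    (f : M → ℝ) : TensorK I M := fun _ => f

/-- The symmetric product `φ ⊙ ψ` of a symmetric `r`-form and a symmetric `l`-form:
`(φ⊙ψ)(v₁,…,v_{r+l}) = (1/(r! l!)) ∑_{σ ∈ S_{r+l}} φ(v_{σ(1)},…,v_{σ(r)}) ψ(v_{σ(r+1)},…)`. -/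
def mulT (r l : ℕ) (φ ψ : TensorK I M) : TensorK I M :=
  fun v x =>
    (((r.factorial * l.factorial : ℕ) : ℝ))⁻¹ *
      ∑ σ : Equiv.Perm (Fin (r + l)),
        φ (fun n => if h : n < r + l then v (σ ⟨n, h⟩ : Fin (r + l)) else v n) x *
        ψ (fun n => if h : r + n < r + l then v (σ ⟨r + n, h⟩ : Fin (r + l)) else v n) x

/-- Contraction `ι_X` with a vector field (degree `r` is the degree of the argument;
by convention `ι_X` vanishes on degree 0). -/
def iotaT (r : ℕ) (X : VF I M) (φ : TensorK I M) : TensorK I M :=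
  match r with
  | 0 => fun _ _ => 0
  | _ + 1 => fun v => φ (fun n => if n = 0 then X else v (n - 1))

/-- The covariant derivative `∇_X φ` of an `r`-form, via the Koszul formula
`(∇_X φ)(v₁,…,v_r) = X(φ(v)) - ∑ᵢ φ(…, ∇_X vᵢ, …)`. -/
def covT (D : AffConn I M) (r : ℕ) (X : VF I M) (φ : TensorK I M) : TensorK I M :=
  fun v x => vAct X (φ v) x -
    ∑ i ∈ Finset.range r, φ (Function.update v i (D.cov X (v i))) x

/-- The symmetric derivative `∇^s φ = (r+1)·sym(∇φ)` of an `r`-form, i.e.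
`(∇^s φ)(v₀,…,v_r) = ∑ⱼ (∇_{vⱼ} φ)(v₀,…,v̂ⱼ,…,v_r)`. -/
def symD (D : AffConn I M) (r : ℕ) (φ : TensorK I M) : TensorK I M :=
  fun v x => ∑ j ∈ Finset.range (r + 1),
    covT D r (v j) φ (fun n => if n < j then v n else v (n + 1)) x

/-- The symmetric Lie derivative `L^s_X = ι_X ∘ ∇^s - ∇^s ∘ ι_X` on `r`-forms. -/
def symL (D : AffConn I M) (r : ℕ) (X : VF I M) (φ : TensorK I M) : TensorK I M :=
  fun v x => iotaT (r + 1) X (symD D r φ) v x - symD D (r - 1) (iotaT r X φ) v x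

/-- The (ordinary) Lie derivative of an `r`-form along a vector field, Koszul style. -/
def lieT (r : ℕ) (X : VF I M) (φ : TensorK I M) : TensorK I M :=
  fun v x => vAct X (φ v) x -
    ∑ i ∈ Finset.range r, φ (Function.update v i (lieB X (v i))) x

/-- The associated torsion-free connection `∇⁰_X Y = ∇_X Y - (1/2) T_∇(X,Y)` of a connection. -/
def covTF (D : AffConn I M) (X Y : VF I M) : VF I M :=
  fun x => D.cov X Y x - (2⁻¹ : ℝ) • (D.cov X Y x - D.cov Y X x - lieB X Y x)

/-- The covariant derivative of an `r`-form along `X` with respect to a covariant derivative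
operator `c` on vector fields, via the Koszul formula. -/
def covTgen (c : VF I M → VF I M → VF I M) (r : ℕ) (X : VF I M) (φ : TensorK I M) :
    TensorK I M :=
  fun v x => vAct X (φ v) x - ∑ i ∈ Finset.range r, φ (Function.update v i (c X (v i))) x

/-! ### Auxiliary lemmas -/

lemma smoothVF_zero : SmoothVF (I := I) (M := M) (fun _ => 0) :=
  (0 : Cₛ^((⊤ : ℕ∞) : WithTop ℕ∞)⟮I; E, TangentSpace I⟯).contMDiff

lemma smoothVF_add {X Y : VF I M} (hX : SmoothVF X) (hY : SmoothVF Y) :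
    SmoothVF (fun x => X x + Y x) :=
  (ContMDiffSection.mk (V := TangentSpace I) X hX +
    ContMDiffSection.mk (V := TangentSpace I) Y hY).contMDiff

lemma smoothVF_lieB (X Y : VF I M) : SmoothVF (lieB X Y) := by
  unfold lieB
  split_ifs with h
  · convert h.choose_spec.1 using 1; exact dif_pos h
  · exact cast (congrArg SmoothVF (dif_neg h).symm) smoothVF_zero

lemma smooth_update {v : ℕ → VF I M} (hv : ∀ i, SmoothVF (v i)) {W : VF I M}
    (hW : SmoothVF W) (j : ℕ) : ∀ i, SmoothVF (Function.update v j W i) := by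
  intro i
  rcases eq_or_ne i j with h | h
  · subst h; simp only [Function.update_self]; exact hW
  · rw [Function.update_of_ne h]; exact hv i

lemma vAct_zero (Z : VF I M) : vAct Z (fun _ => (0 : ℝ)) = fun _ => 0 := by
  funext x
  simp [vAct, mfderiv_const]; rfl

lemma iotaT_zero (X : VF I M) (φ : TensorK I M) : iotaT 0 X φ = fun _ _ => 0 := rfl

lemma iotaT_succ (r : ℕ) (X : VF I M) (φ : TensorK I M) :
    iotaT (r + 1) X φ = fun v => φ (fun n => if n = 0 then X else v (n - 1)) := rfl

lemma sBr_def (D : AffConn I M) (X Y : VF I M) :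
    sBr D X Y = fun x => D.cov X Y x + D.cov Y X x := rfl

lemma sym_update_zero {r : ℕ} {φ : TensorK I M} (hφ : IsSymTensor r φ)
    (v : ℕ → VF I M) (hv : ∀ i, SmoothVF (v i)) {i : ℕ} (hi : i < r) :
    φ (Function.update v i (fun _ => 0)) = fun _ => 0 := by
  have h := hφ.2.2.2.1 v hv i hi (fun _ => (0 : ℝ)) contMDiff_const
  simp only [zero_smul, zero_mul] at h
  exact h

lemma sym_update_add {r : ℕ} {φ : TensorK I M} (hφ : IsSymTensor r φ)
    (v : ℕ → VF I M) (hv : ∀ i, SmoothVF (v i)) {i : ℕ} (hi : i < r)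
    {A B : VF I M} (hA : SmoothVF A) (hB : SmoothVF B) :
    φ (Function.update v i (fun x => A x + B x)) =
      fun x => φ (Function.update v i A) x + φ (Function.update v i B) x := by
  have h := hφ.2.2.1 v hv i hi A B hA hB 1
  simpa [one_smul] using h

lemma sym_update_half {r : ℕ} {φ : TensorK I M} (hφ : IsSymTensor r φ)
    (v : ℕ → VF I M) (hv : ∀ i, SmoothVF (v i)) {i : ℕ} (hi : i < r)
    {Z : VF I M} (hZ : SmoothVF Z) :
    φ (Function.update v i (fun x => (2⁻¹ : ℝ) • Z x)) =
      fun x => (2⁻¹ : ℝ) * φ (Function.update v i Z) x := by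
  have h := hφ.2.2.1 v hv i hi (fun _ => 0) Z smoothVF_zero hZ 2⁻¹
  simpa [sym_update_zero hφ v hv hi] using h

lemma sym_update_covTF {r : ℕ} {φ : TensorK I M} (hφ : IsSymTensor r φ)
    (D : AffConn I M) {X : VF I M} (hX : SmoothVF X)
    (v : ℕ → VF I M) (hv : ∀ i, SmoothVF (v i)) {i : ℕ} (hi : i < r) :
    φ (Function.update v i (covTF D X (v i))) =
      fun x => (2⁻¹ : ℝ) *
        (φ (Function.update v i (sBr D X (v i))) x +
          φ (Function.update v i (lieB X (v i))) x) := by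
  have hsbr : SmoothVF (sBr D X (v i)) :=
    smoothVF_add (D.cov_smooth _ _ hX (hv i)) (D.cov_smooth _ _ (hv i) hX)
  have hlie : SmoothVF (lieB X (v i)) := smoothVF_lieB _ _
  have hZ : SmoothVF (fun x => sBr D X (v i) x + lieB X (v i) x) := smoothVF_add hsbr hlie
  have e : covTF D X (v i) =
      fun x => (2⁻¹ : ℝ) • (fun y => sBr D X (v i) y + lieB X (v i) y) x := by
    funext x
    simp only [covTF, sBr]
    module
  rw [e, sym_update_half hφ v hv hi hZ, sym_update_add hφ v hv hi hsbr hlie]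

lemma sym_rearr {r : ℕ} {φ : TensorK I M} (hφ : IsSymTensor r φ) :
    ∀ j, j < r → ∀ v : ℕ → VF I M, (∀ i, SmoothVF (v i)) →
    ∀ W : VF I M, SmoothVF W →
    φ (fun n => if n = 0 then W else if n < j + 1 then v (n - 1) else v n) =
      φ (Function.update v j W) := by
  intro j
  induction j with
  | zero =>
    intro _ v hv W hW
    have e : (fun n => if n = 0 then W else if n < 0 + 1 then v (n - 1) else v n) =
        Function.update v 0 W := by
      funext n
      rcases n with _ | k
      · simp
      · simp only [Function.update_apply, Nat.succ_ne_zero, if_false]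
        rw [if_neg (by omega)]
    rw [e]
  | succ j ih =>
    intro hj v hv W hW
    have hj' : j < r := Nat.lt_of_succ_lt hj
    set v' : ℕ → VF I M := fun n => v (Equiv.swap j (j + 1) n) with hv'def
    have hv' : ∀ i, SmoothVF (v' i) := fun i => hv _
    have e1 : (fun n => if n = 0 then W else if n < j + 1 + 1 then v (n - 1) else v n) =
        (fun n => if n = 0 then W else if n < j + 1 then v' (n - 1) else v' n) := by
      funext n
      rcases n with _ | k
      · rfl
      · simp only [Nat.succ_ne_zero, if_false, Nat.add_sub_cancel, hv'def]
        by_cases h1 : k + 1 < j + 1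
        · rw [if_pos (by omega), if_pos h1,
            Equiv.swap_apply_of_ne_of_ne (by omega) (by omega)]
        · by_cases h2 : k = j
          · subst h2
            rw [if_pos (by omega), if_neg (by omega), Equiv.swap_apply_right]
          · rw [if_neg (by omega), if_neg (by omega),
              Equiv.swap_apply_of_ne_of_ne (by omega) (by omega)]
    rw [e1, ih hj' v' hv' W hW]
    have e2 : Function.update v' j W =
        (Function.update v (j + 1) W) ∘ (Equiv.swap j (j + 1)) := by
      funext n
      simp only [Function.comp_apply, Function.update_apply, hv'def]
      by_cases h1 : n = j
      · subst h1
        rw [Equiv.swap_apply_left]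
        simp
      · have hne : Equiv.swap j (j + 1) n ≠ j + 1 := by
          intro hc
          apply h1
          have := congrArg (Equiv.swap j (j + 1)) hc
          rwa [Equiv.swap_apply_self, Equiv.swap_apply_right] at this
        rw [if_neg h1, if_neg hne]
    rw [e2]
    exact hφ.2.1 (Function.update v (j + 1) W) (smooth_update hv hW (j + 1)) j (j + 1) hj' hj

lemma symD_zero_apply (D : AffConn I M) (φ : TensorK I M) (u : ℕ → VF I M) (x : M) :
    symD D 0 φ u x = vAct (u 0) (φ (fun n => u (n + 1))) x := by
  simp only [symD, covT, Finset.sum_range_succ, Finset.sum_range_zero, sub_zero, zero_add]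
  have e : (fun n => if n < 0 then u n else u (n + 1)) = fun n => u (n + 1) := by
    funext n
    rw [if_neg (Nat.not_lt_zero n)]
  rw [e]

lemma symL_eq {r : ℕ} {φ : TensorK I M} (hφ : IsSymTensor r φ) (D : AffConn I M)
    {X : VF I M} (hX : SmoothVF X) (v : ℕ → VF I M) (hv : ∀ i, SmoothVF (v i)) :
    symL D r X φ v = fun x => vAct X (φ v) x -
      (∑ i ∈ Finset.range r, φ (Function.update v i (D.cov X (v i))) x) -
      (∑ i ∈ Finset.range r, φ (Function.update v i (D.cov (v i) X)) x) := by
  rcases r with _ | m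
  · -- degree 0
    funext x
    show symD D 0 φ (fun n => if n = 0 then X else v (n - 1)) x
        - symD D 0 (fun _ _ => (0 : ℝ)) v x = _
    have e1 : (fun n => if n + 1 = 0 then X else v (n + 1 - 1)) = v := by
      funext n
      rw [if_neg (Nat.succ_ne_zero n), Nat.add_sub_cancel]
    have h2 : symD D 0 (fun _ _ => (0 : ℝ)) v x = 0 := by
      exact (symD_zero_apply D (fun _ _ => (0 : ℝ)) v x).trans (congrFun (vAct_zero (v 0)) x)
    simp only [symD_zero_apply, h2, e1, eq_self_iff_true, if_true]
    simp
  · -- degree m + 1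
    funext x
    show symD D (m + 1) φ (fun n => if n = 0 then X else v (n - 1)) x
        - symD D m (iotaT (m + 1) X φ) v x = _
    set w : ℕ → VF I M := fun n => if n = 0 then X else v (n - 1) with hw
    set u : ℕ → ℕ → VF I M := fun k n => if n = 0 then X else if n < k then v (n - 1) else v n
      with hu
    -- first piece
    have hA : symD D (m + 1) φ w x =
        (∑ j ∈ Finset.range (m + 1), covT D (m + 1) (v j) φ (u (j + 1)) x)
          + covT D (m + 1) X φ v x := by
      simp only [symD]
      rw [Finset.sum_range_succ']
      refine congrArg₂ (· + ·) ?_ ?_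
      · refine Finset.sum_congr rfl fun j _ => ?_
        have hwj : w (j + 1) = v j := by
          show (if j + 1 = 0 then X else v (j + 1 - 1)) = v j
          rw [if_neg (Nat.succ_ne_zero j), Nat.add_sub_cancel]
        have harg : (fun n => if n < j + 1 then w n else w (n + 1)) = u (j + 1) := by
          funext n
          rcases n with _ | k
          · simp only [hw, hu, Nat.add_sub_cancel]
            split_ifs <;> first | rfl | contradiction | omega | exact congrArg v (by omega)
          · simp only [hw, hu, Nat.add_sub_cancel]
            split_ifs <;> first | rfl | contradiction | omega | exact congrArg v (by omega)
        rw [hwj, harg]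
      · have hw0 : w 0 = X := rfl
        have harg : (fun n => if n < 0 then w n else w (n + 1)) = v := by
          funext n
          rw [if_neg (Nat.not_lt_zero n)]
          show (if n + 1 = 0 then X else v (n + 1 - 1)) = v n
          rw [if_neg (Nat.succ_ne_zero n), Nat.add_sub_cancel]
        rw [hw0, harg]
    -- second piece
    have hB : symD D m (iotaT (m + 1) X φ) v x =
        ∑ j ∈ Finset.range (m + 1),
          (vAct (v j) (φ (u (j + 1))) x -
            ∑ i ∈ Finset.range m,
              φ (Function.update (u (j + 1)) (i + 1)
                (D.cov (v j) (u (j + 1) (i + 1)))) x) := by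
      simp only [symD]
      refine Finset.sum_congr rfl fun j hj => ?_
      set u' : ℕ → VF I M := fun n => if n < j then v n else v (n + 1) with hu'
      have c1 : (fun n => if n = 0 then X else u' (n - 1)) = u (j + 1) := by
        funext n
        rcases n with _ | k
        · simp only [hu', hu, Nat.add_sub_cancel]
          split_ifs <;> first | rfl | contradiction | omega | exact congrArg v (by omega)
        · simp only [hu', hu, Nat.add_sub_cancel]
          split_ifs <;> first | rfl | contradiction | omega | exact congrArg v (by omega)
      simp only [covT, iotaT_succ]
      rw [c1]
      congr 1
      refine Finset.sum_congr rfl fun i hi => ?_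
      have hcovarg : u' i = u (j + 1) (i + 1) := by
        rw [← c1]
        show u' i = if i + 1 = 0 then X else u' (i + 1 - 1)
        rw [if_neg (Nat.succ_ne_zero i), Nat.add_sub_cancel]
      have c2 : (fun n => if n = 0 then X
            else Function.update u' i (D.cov (v j) (u' i)) (n - 1)) =
          Function.update (u (j + 1)) (i + 1) (D.cov (v j) (u (j + 1) (i + 1))) := by
        rw [← hcovarg]
        funext n
        rcases n with _ | k
        · simp only [Function.update_apply, hu, hu', Nat.add_sub_cancel]
          split_ifs <;> first | rfl | contradiction | omega | exact congrArg v (by omega)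
        · simp only [Function.update_apply, hu, hu', Nat.add_sub_cancel]
          split_ifs <;> first | rfl | contradiction | omega | exact congrArg v (by omega)
      rw [c2]
    -- per-index difference
    have key : ∀ j ∈ Finset.range (m + 1),
        covT D (m + 1) (v j) φ (u (j + 1)) x -
          (vAct (v j) (φ (u (j + 1))) x -
            ∑ i ∈ Finset.range m,
              φ (Function.update (u (j + 1)) (i + 1)
                (D.cov (v j) (u (j + 1) (i + 1)))) x) =
        - φ (Function.update v j (D.cov (v j) X)) x := by
      intro j hj
      have hjm : j < m + 1 := Finset.mem_range.mp hj
      simp only [covT]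
      rw [Finset.sum_range_succ'
        (fun i => φ (Function.update (u (j + 1)) i (D.cov (v j) (u (j + 1) i))) x)]
      have hu0 : u (j + 1) 0 = X := rfl
      have hupd : Function.update (u (j + 1)) 0 (D.cov (v j) X) =
          fun n => if n = 0 then D.cov (v j) X else if n < j + 1 then v (n - 1) else v n := by
        funext n
        rcases n with _ | k
        · simp
        · simp only [Function.update_apply, hu, Nat.add_sub_cancel]
          split_ifs <;> first | rfl | contradiction | omega | exact congrArg v (by omega)
      have hre := sym_rearr hφ j hjm v hv (D.cov (v j) X) (D.cov_smooth _ _ (hv j) hX)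
      rw [hu0]
      have heq : φ (Function.update (u (j + 1)) 0 (D.cov (v j) X)) x =
          φ (Function.update v j (D.cov (v j) X)) x := by
        rw [hupd, ← hre]
      rw [heq]
      ring
    -- combine
    rw [hA, hB]
    have hAB : (∑ j ∈ Finset.range (m + 1), covT D (m + 1) (v j) φ (u (j + 1)) x)
        - (∑ j ∈ Finset.range (m + 1),
            (vAct (v j) (φ (u (j + 1))) x -
              ∑ i ∈ Finset.range m,
                φ (Function.update (u (j + 1)) (i + 1)
                  (D.cov (v j) (u (j + 1) (i + 1)))) x))
        = ∑ j ∈ Finset.range (m + 1), - φ (Function.update v j (D.cov (v j) X)) x := by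
      rw [← Finset.sum_sub_distrib]
      exact Finset.sum_congr rfl key
    rw [Finset.sum_neg_distrib] at hAB
    have hC : covT D (m + 1) X φ v x = vAct X (φ v) x
        - ∑ i ∈ Finset.range (m + 1), φ (Function.update v i (D.cov X (v i))) x := rfl
    rw [hC]
    linarith [hAB]

/-- **Statement 8.** For an affine connection `∇` with associated torsion-free connection `∇⁰`
and any vector field `X`, one has `∇⁰_X = (1/2)(L^s_X + L_X)` as derivations of the algebra
`Υ^•(M)` of symmetric forms. -/
theorem stmt8
    {E : Type} [NormedAddCommGroup E] [NormedSpace ℝ E]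
    {H : Type} [TopologicalSpace H] (I : ModelWithCorners ℝ E H)
    (M : Type) [TopologicalSpace M] [ChartedSpace H M] [IsManifold I (⊤ : ℕ∞) M]
    (D : AffConn I M) (X : VF I M) (hX : SmoothVF X)
    (r : ℕ) (φ : TensorK I M) (hφ : IsSymTensor r φ) :
    EqTen (covTgen (covTF D) r X φ)
      (fun v x => (2⁻¹ : ℝ) * (symL D r X φ v x + lieT r X φ v x)) := by
  intro v hv
  funext x
  have hsym := congrFun (symL_eq hφ D hX v hv) x
  show vAct X (φ v) x - ∑ i ∈ Finset.range r, φ (Function.update v i (covTF D X (v i))) x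
      = (2⁻¹ : ℝ) * (symL D r X φ v x + lieT r X φ v x)
  rw [hsym]
  simp only [lieT]
  have hcov : ∀ i ∈ Finset.range r, φ (Function.update v i (covTF D X (v i))) x
      = (2⁻¹ : ℝ) * (φ (Function.update v i (sBr D X (v i))) x +
          φ (Function.update v i (lieB X (v i))) x) := by
    intro i hi
    exact congrFun (sym_update_covTF hφ D hX v hv (Finset.mem_range.mp hi)) x
  rw [Finset.sum_congr rfl hcov, ← Finset.mul_sum, Finset.sum_add_distrib]
  have hsbr : ∀ i ∈ Finset.range r, φ (Function.update v i (sBr D X (v i))) x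
      = φ (Function.update v i (D.cov X (v i))) x +
        φ (Function.update v i (D.cov (v i) X)) x := by
    intro i hi
    have hi' := Finset.mem_range.mp hi
    have := sym_update_add hφ v hv hi' (D.cov_smooth _ _ hX (hv i))
      (D.cov_smooth _ _ (hv i) hX)
    rw [sBr_def]
    exact congrFun this x
  rw [Finset.sum_congr rfl hsbr, Finset.sum_add_distrib]
  ring

end SymCartan
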